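/- For every natural number D ≥ 2, the following identity of convergent series holds in ℝ: ∑_{d=0}^{D−1} ∑_{k=0}^{∞} (2^(k+1) − (−1)^(k+1)) / (3 · 2^(1 + d + D·k)) = 2^D · (2^D − 1) / ((2^D − 2) · (2^D + 1)). This is the asymptotic (n → ∞) transmission-delay-optimality factor of bandwidth-optimal Swing on a D-dimensional torus, relative to the ideal cost mβ/D. -/

import Mathlib

/-- **Asymptotic transmission-delay factor of bandwidth-optimal Swing on a
`D`-dimensional torus** (`D ≥ 2`), relative to the ideal cost `mβ/D`: in global
step `k` within dimension offset `d` the transmitted data fraction is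
`1/2^(1+d+D·k)` and the per-link congestion is `(2^(k+1) - (-1)^(k+1))/3`. As `n → ∞`,
`∑_{d=0}^{D-1} ∑_{k=0}^{∞} (2^(k+1) - (-1)^(k+1)) / (3 · 2^(1+d+D·k))
  = 2^D (2^D - 1) / ((2^D - 2)(2^D + 1))`. -/
theorem swing_bw_tx_delay_torus (D : ℕ) (hD : 2 ≤ D) :
    ∑ d ∈ Finset.range D,
        ∑' k : ℕ, ((2 : ℝ) ^ (k + 1) - (-1 : ℝ) ^ (k + 1)) / (3 * 2 ^ (1 + d + D * k))
      = (2 : ℝ) ^ D * ((2 : ℝ) ^ D - 1) / (((2 : ℝ) ^ D - 2) * ((2 : ℝ) ^ D + 1)) := by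
  have h4 : (4 : ℝ) ≤ 2 ^ D := by
    calc (4 : ℝ) = 2 ^ 2 := by norm_num
    _ ≤ 2 ^ D := pow_le_pow_right₀ one_le_two hD
  have hpos : (0 : ℝ) < 2 ^ D := by positivity
  have hne : ((2 : ℝ) ^ D) ≠ 0 := ne_of_gt hpos
  have ha : ‖(2 / 2 ^ D : ℝ)‖ < 1 := by
    rw [Real.norm_eq_abs, abs_of_nonneg (by positivity)]
    rw [div_lt_one hpos]; linarith
  have hb : ‖(-1 / 2 ^ D : ℝ)‖ < 1 := by
    rw [Real.norm_eq_abs]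
    rw [abs_div, abs_neg, abs_one, abs_of_pos hpos, div_lt_one hpos]; linarith
  have key : ∀ d : ℕ,
      (∑' k : ℕ, ((2 : ℝ) ^ (k + 1) - (-1 : ℝ) ^ (k + 1)) / (3 * 2 ^ (1 + d + D * k)))
        = (1 / (3 * 2 ^ (1 + d))) * (2 * (1 - 2 / 2 ^ D)⁻¹ + (1 - (-1 / 2 ^ D))⁻¹) := by
    intro d
    have h1 : ∀ k : ℕ, ((2 : ℝ) ^ (k + 1) - (-1 : ℝ) ^ (k + 1)) / (3 * 2 ^ (1 + d + D * k))
        = (1 / (3 * 2 ^ (1 + d))) * (2 * (2 / 2 ^ D) ^ k + (-1 / 2 ^ D) ^ k) := by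
      intro k
      have h2 : ((2 : ℝ)) ^ (1 + d + D * k) = 2 ^ (1 + d) * (2 ^ D) ^ k := by
        rw [pow_add, pow_mul]
      rw [h2, div_pow, div_pow, pow_succ, pow_succ]
      have hk : ((2 : ℝ) ^ D) ^ k ≠ 0 := by positivity
      field_simp
      ring
    rw [tsum_congr h1, tsum_mul_left]
    congr 1
    rw [Summable.tsum_add ((summable_geometric_of_norm_lt_one ha).mul_left 2)
        (summable_geometric_of_norm_lt_one hb), tsum_mul_left,
        tsum_geometric_of_norm_lt_one ha, tsum_geometric_of_norm_lt_one hb]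
  rw [Finset.sum_congr rfl (fun d _ => key d)]
  have h3 : ∀ (C : ℝ) (d : ℕ), (1 / (3 * (2 : ℝ) ^ (1 + d))) * C
      = ((1 : ℝ) / 2) ^ d * (C / 6) := by
    intro C d
    have h2 : ((2 : ℝ)) ^ (1 + d) = 2 * 2 ^ d := by rw [pow_add, pow_one]
    have hd : ((2 : ℝ)) ^ d ≠ 0 := by positivity
    rw [h2, div_pow, one_pow]
    field_simp
    ring
  rw [Finset.sum_congr rfl (fun d _ => h3 _ d), ← Finset.sum_mul,
    geom_sum_eq (by norm_num : ((1 : ℝ) / 2) ≠ 1)]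
  have hhalf : ((1 : ℝ) / 2) ^ D = 1 / 2 ^ D := by rw [div_pow, one_pow]
  rw [hhalf]
  have hA : (1 : ℝ) - 2 / 2 ^ D ≠ 0 := by
    have : (2 : ℝ) / 2 ^ D < 1 := by rw [div_lt_one hpos]; linarith
    intro h; rw [sub_eq_zero] at h; linarith
  have hB : (1 : ℝ) - (-1 / 2 ^ D) ≠ 0 := by
    have : (-1 : ℝ) / 2 ^ D < 1 := by rw [div_lt_one hpos]; linarith
    intro h; rw [sub_eq_zero] at h; linarith
  have hC : ((2 : ℝ) ^ D - 2) ≠ 0 := by intro h; nlinarith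
  have hE : ((2 : ℝ) ^ D + 1) ≠ 0 := by positivity
  field_simp
  rw [sub_neg_eq_add]
  field_simp
  ring
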